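/- Let N = C + iD be a bounded normal operator on a complex Hilbert space with D ≥ 0. Then T = ((|N|+C)/2)^{1/2} + i((|N|-C)/2)^{1/2} is a normal operator satisfying T² = N. -/

import Mathlib

set_option synthInstance.maxHeartbeats 1000000
set_option maxHeartbeats 1000000

section AuxCFC

variable {A : Type*} [CStarAlgebra A]

/-- If `b` commutes with a selfadjoint `a`, then `b` commutes with `cfc f a` for any
real function `f`. -/
lemma commute_cfc_real {a b : A} (ha : IsSelfAdjoint a) (hb : Commute b a)
    (f : ℝ → ℝ) : Commute b (cfc f a) := by
  by_cases hf : ContinuousOn f (spectrum ℝ a)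
  · rw [cfc_apply f a ha hf]
    generalize (⟨_, hf.restrict⟩ : C(spectrum ℝ a, ℝ)) = g
    induction g using ContinuousMap.induction_on_of_compact with
    | const r =>
      have : (ContinuousMap.const (spectrum ℝ a) r) = algebraMap ℝ C(spectrum ℝ a, ℝ) r := rfl
      rw [this, AlgHomClass.commutes]
      exact (Algebra.commutes r b).symm
    | id => rw [cfcHom_id ha]; exact hb
    | star_id => rw [star_trivial, cfcHom_id ha]; exact hb
    | add f g hf hg => rw [map_add]; exact hf.add_right hg
    | mul f g hf hg => rw [map_mul]; exact hf.mul_right hg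
    | frequently f hf =>
      have hcl : IsClosed {x : C(spectrum ℝ a, ℝ) | Commute b (cfcHom ha x)} :=
        isClosed_eq ((continuous_mul_left b).comp (cfcHom_continuous ha))
          ((continuous_mul_right b).comp (cfcHom_continuous ha))
      exact hcl.closure_subset hf.mem_closure
  · rw [cfc_apply_of_not_continuousOn a hf]; exact Commute.zero_right b

variable [PartialOrder A] [StarOrderedRing A]

lemma sqrt_eq_cfc_real {a : A} (ha : 0 ≤ a) : CFC.sqrt a = cfc Real.sqrt a := by
  refine CFC.sqrt_unique ?_ ?_
  · rw [← cfc_mul _ _ a (by fun_prop) (by fun_prop)]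
    conv_rhs => rw [← cfc_id ℝ a ha.isSelfAdjoint]
    exact cfc_congr fun x hx => Real.mul_self_sqrt (spectrum_nonneg_of_nonneg ha hx)
  · exact cfc_nonneg fun x _ => Real.sqrt_nonneg x

lemma commute_sqrt {a b : A} (ha : 0 ≤ a) (hb : Commute b a) : Commute b (CFC.sqrt a) := by
  rw [sqrt_eq_cfc_real ha]
  exact commute_cfc_real ha.isSelfAdjoint hb _

omit [PartialOrder A] [StarOrderedRing A] in
lemma commute_negPart {a b : A} (ha : IsSelfAdjoint a) (hb : Commute b a) : Commute b a⁻ := by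
  rw [CFC.negPart_def, cfcₙ_eq_cfc]
  exact commute_cfc_real ha hb _

lemma commute_mul_nonneg {a b : A} (ha : 0 ≤ a) (hb : 0 ≤ b) (hab : Commute a b) :
    0 ≤ a * b := by
  have h1 : Commute b (CFC.sqrt a) := commute_sqrt ha hab.symm
  have h2 : a * b = star (CFC.sqrt a) * b * CFC.sqrt a := by
    rw [(CFC.sqrt_nonneg (a := a)).star_eq, mul_assoc, h1.eq, ← mul_assoc,
      CFC.sqrt_mul_sqrt_self a ha]
  rw [h2]
  exact star_left_conjugate_nonneg hb _

/-- For commuting elements with `a` nonnegative and `b` selfadjoint, `b * b ≤ a * a`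
implies `b ≤ a`. -/
lemma le_of_mul_self_le_mul_self {a b : A} (ha : 0 ≤ a) (hb : IsSelfAdjoint b)
    (hab : Commute a b) (h : b * b ≤ a * a) : b ≤ a := by
  obtain ⟨x, hxdef⟩ : ∃ x, x = a - b := ⟨_, rfl⟩
  have hxsa : IsSelfAdjoint x := hxdef ▸ ha.isSelfAdjoint.sub hb
  have hax : Commute a x := hxdef ▸ (Commute.refl a).sub_right hab
  obtain ⟨y, hydef⟩ : ∃ y, y = x⁻ := ⟨_, rfl⟩
  have hy0 : (0 : A) ≤ y := hydef ▸ CFC.negPart_nonneg x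
  have hysa : IsSelfAdjoint y := hy0.isSelfAdjoint
  have hay : Commute a y := hydef ▸ commute_negPart hxsa hax
  have hxy : Commute x y := hydef ▸ commute_negPart hxsa (Commute.refl x)
  have hbax : b = a - x := by rw [hxdef, sub_sub_cancel]
  have hby : Commute b y := hbax ▸ hay.sub_left hxy
  have hkey : x * y = -(y * y) := by
    have h5 : (x⁺ - x⁻) * x⁻ = x * x⁻ := by rw [CFC.posPart_sub_negPart x hxsa]
    rw [hydef, ← h5, sub_mul, CFC.posPart_mul_negPart, zero_sub]
  have hsq : a * a - b * b = x * (a + b) := by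
    rw [hxdef, sub_mul, mul_add, mul_add, hab.eq]; abel
  have h0 : (0 : A) ≤ y * (x * (a + b)) * y := by
    have := star_left_conjugate_nonneg (sub_nonneg.mpr h) y
    rwa [hysa.star_eq, hsq] at this
  have e1 : y * x = -(y * y) := by rw [← hxy.eq, hkey]
  have e2 : (a + b) * y = y * (a + b) := (hay.add_left hby).eq
  have e4 : y*y*y*x = -((y*y)*(y*y)) := by
    rw [mul_assoc (y*y) y x, e1, mul_neg]
  have hid : y * (x * (a + b)) * y = -((y*y*y*a + y*y*y*a) + (y*y)*(y*y)) := by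
    calc y * (x * (a + b)) * y
        = (y*x) * ((a+b) * y) := by noncomm_ring
      _ = -(y*y) * (y*(a+b)) := by rw [e1, e2]
      _ = -(y*y*y*a + y*y*y*b) := by noncomm_ring
      _ = -(y*y*y*a + (y*y*y*a - y*y*y*x)) := by rw [hbax, mul_sub]
      _ = -((y*y*y*a + y*y*y*a) + (y*y)*(y*y)) := by rw [e4]; abel
  rw [hid] at h0
  have hya : Commute y a := hay.symm
  have hyy : (0:A) ≤ y * y := commute_mul_nonneg hy0 hy0 (Commute.refl y)
  have hyyy : (0:A) ≤ y * y * y :=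
    commute_mul_nonneg hyy hy0 ((Commute.refl y).mul_left (Commute.refl y))
  have h1 : (0:A) ≤ y*y*y * a :=
    commute_mul_nonneg hyyy ha ((hya.mul_left hya).mul_left hya)
  have h2 : (0:A) ≤ (y*y)*(y*y) :=
    commute_mul_nonneg hyy hyy (Commute.refl _)
  have hle : (y*y*y*a + y*y*y*a) + (y*y)*(y*y) ≤ 0 := neg_nonneg.mp h0
  have hy4 : (y*y)*(y*y) = 0 :=
    le_antisymm (le_trans (le_add_of_nonneg_left (add_nonneg h1 h1)) hle) h2
  have hy2 : y*y = 0 := by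
    have h5 := CFC.sqrt_mul_self (y*y) hyy
    rw [hy4, CFC.sqrt_zero] at h5
    exact h5.symm
  have hyz : y = 0 := by
    have h5 := CFC.sqrt_mul_self y hy0
    rw [hy2, CFC.sqrt_zero] at h5
    exact h5.symm
  have : (0:A) ≤ x := by
    rw [hydef] at hyz
    exact (CFC.negPart_eq_zero_iff x hxsa).mp hyz
  rw [hxdef] at this
  exact sub_nonneg.mp this

lemma smul_nonneg_complex {r : ℝ} (hr : 0 ≤ r) {x : A} (hx : 0 ≤ x) :
    (0 : A) ≤ (r : ℂ) • x := by
  have h1 : x = star (CFC.sqrt x) * CFC.sqrt x := by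
    rw [(CFC.sqrt_nonneg (a := x)).star_eq, CFC.sqrt_mul_sqrt_self x hx]
  have h2 : (r : ℂ) • (star (CFC.sqrt x) * CFC.sqrt x)
      = star ((Real.sqrt r : ℂ) • CFC.sqrt x) * ((Real.sqrt r : ℂ) • CFC.sqrt x) := by
    rw [star_smul, smul_mul_smul_comm, Complex.star_def, Complex.conj_ofReal,
      ← Complex.ofReal_mul, Real.mul_self_sqrt hr]
  rw [h1, h2]
  exact star_mul_self_nonneg _

end AuxCFC

open ContinuousLinearMap in
theorem normal_sqrt_of_im_nonneg
    {H : Type*} [NormedAddCommGroup H] [InnerProductSpace ℂ H] [CompleteSpace H]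
    (N C D : H →L[ℂ] H) (hC : IsSelfAdjoint C) (hD : IsSelfAdjoint D)
    (hN : N = C + Complex.I • D) (hnormal : IsStarNormal N) (hD0 : 0 ≤ D) :
    IsStarNormal (CFC.sqrt ((2 : ℂ)⁻¹ • (CFC.sqrt (star N * N) + C)) +
        Complex.I • CFC.sqrt ((2 : ℂ)⁻¹ • (CFC.sqrt (star N * N) - C))) ∧
    (CFC.sqrt ((2 : ℂ)⁻¹ • (CFC.sqrt (star N * N) + C)) +
        Complex.I • CFC.sqrt ((2 : ℂ)⁻¹ • (CFC.sqrt (star N * N) - C))) ^ 2 = N := by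
  have hstarN : star N = C - Complex.I • D := by
    rw [hN, star_add, hC.star_eq, star_smul, hD.star_eq, Complex.star_def, Complex.conj_I,
      neg_smul, ← sub_eq_add_neg]
  -- C and D commute
  have hCD : C * D = D * C := by
    have h1 : star N * N = N * star N := hnormal.star_comm_self
    rw [hstarN, hN] at h1
    have h2 : (C - Complex.I • D) * (C + Complex.I • D)
        - (C + Complex.I • D) * (C - Complex.I • D)
        = (2 * Complex.I) • (C * D - D * C) := by
      simp only [mul_add, add_mul, mul_sub, sub_mul, smul_mul_assoc, mul_smul_comm, smul_smul,
        smul_sub, smul_add]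
      module
    rw [h1, sub_self] at h2
    have h3 : C * D - D * C = 0 := by
      rcases smul_eq_zero.mp h2.symm with h | h
      · exact absurd h (by simp [Complex.I_ne_zero])
      · exact h
    linear_combination (norm := abel) h3
  have hCDc : Commute C D := hCD
  have hNN : star N * N = C * C + D * D := by
    rw [hstarN, hN]
    simp only [mul_add, add_mul, mul_sub, sub_mul, smul_mul_assoc, mul_smul_comm, smul_smul,
      Complex.I_mul_I, neg_one_smul]
    rw [hCD]
    match_scalars <;> simp [Complex.I_sq]
  set S := CFC.sqrt (star N * N) with hSdef
  have hNN0 : (0 : H →L[ℂ] H) ≤ star N * N := star_mul_self_nonneg N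
  have hS0 : (0 : H →L[ℂ] H) ≤ S := CFC.sqrt_nonneg _
  have hSS : S * S = C * C + D * D := by
    rw [hSdef, CFC.sqrt_mul_sqrt_self _ hNN0, hNN]
  have hCS : Commute C S := by
    refine commute_sqrt hNN0 ?_
    rw [hNN]
    exact ((Commute.refl C).mul_right (Commute.refl C)).add_right (hCDc.mul_right hCDc)
  have hDS : Commute D S := by
    refine commute_sqrt hNN0 ?_
    rw [hNN]
    exact (hCDc.symm.mul_right hCDc.symm).add_right ((Commute.refl D).mul_right (Commute.refl D))
  have hDD0 : (0 : H →L[ℂ] H) ≤ D * D := by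
    have := star_mul_self_nonneg D; rwa [hD.star_eq] at this
  have hCle : C ≤ S :=
    le_of_mul_self_le_mul_self hS0 hC hCS.symm
      (by rw [hSS]; exact le_add_of_nonneg_right hDD0)
  have hnegCle : -C ≤ S :=
    le_of_mul_self_le_mul_self hS0 hC.neg hCS.symm.neg_right
      (by rw [neg_mul_neg, hSS]; exact le_add_of_nonneg_right hDD0)
  have hSpC : (0 : H →L[ℂ] H) ≤ S + C := by
    have := sub_nonneg.mpr hnegCle; rwa [sub_neg_eq_add] at this
  have hSmC : (0 : H →L[ℂ] H) ≤ S - C := sub_nonneg.mpr hCle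
  have half : ((2 : ℂ)⁻¹) = (((2⁻¹ : ℝ)) : ℂ) := by norm_num
  have hP0 : (0 : H →L[ℂ] H) ≤ (2 : ℂ)⁻¹ • (S + C) := by
    rw [half]; exact smul_nonneg_complex (by norm_num) hSpC
  have hQ0 : (0 : H →L[ℂ] H) ≤ (2 : ℂ)⁻¹ • (S - C) := by
    rw [half]; exact smul_nonneg_complex (by norm_num) hSmC
  set P := (2 : ℂ)⁻¹ • (S + C) with hPdef
  set Q := (2 : ℂ)⁻¹ • (S - C) with hQdef
  have hPQc : Commute P Q := by
    have h : Commute (S + C) (S - C) :=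
      ((Commute.refl S).sub_right hCS.symm).add_left (hCS.sub_right (Commute.refl C))
    exact (h.smul_left _).smul_right _
  set A' := CFC.sqrt P with hAdef
  set B' := CFC.sqrt Q with hBdef
  have hA0 : (0 : H →L[ℂ] H) ≤ A' := CFC.sqrt_nonneg _
  have hB0 : (0 : H →L[ℂ] H) ≤ B' := CFC.sqrt_nonneg _
  have hA2 : A' * A' = P := CFC.sqrt_mul_sqrt_self P hP0
  have hB2 : B' * B' = Q := CFC.sqrt_mul_sqrt_self Q hQ0
  have hABc : Commute A' B' := commute_sqrt hQ0 (commute_sqrt hP0 hPQc.symm).symm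
  have hPQ : P * Q = ((2 : ℂ)⁻¹ • D) * ((2 : ℂ)⁻¹ • D) := by
    rw [hPdef, hQdef, smul_mul_smul_comm, smul_mul_smul_comm]
    congr 1
    have h : (S + C) * (S - C) = S * S - C * C := by
      simp only [mul_sub, add_mul]
      rw [hCS.eq]
      abel
    rw [h, hSS]
    abel
  have hD20 : (0 : H →L[ℂ] H) ≤ (2 : ℂ)⁻¹ • D := by
    rw [half]; exact smul_nonneg_complex (by norm_num) hD0
  have hABD : A' * B' = (2 : ℂ)⁻¹ • D := by
    have h1 : (0 : H →L[ℂ] H) ≤ A' * B' := commute_mul_nonneg hA0 hB0 hABc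
    have h2 : (A' * B') * (A' * B') = ((2 : ℂ)⁻¹ • D) * ((2 : ℂ)⁻¹ • D) := by
      calc (A' * B') * (A' * B') = A' * (B' * A') * B' := by noncomm_ring
        _ = A' * (A' * B') * B' := by rw [← hABc.eq]
        _ = (A' * A') * (B' * B') := by noncomm_ring
        _ = P * Q := by rw [hA2, hB2]
        _ = _ := hPQ
    calc A' * B' = CFC.sqrt ((A' * B') * (A' * B')) := (CFC.sqrt_mul_self _ h1).symm
      _ = CFC.sqrt (((2 : ℂ)⁻¹ • D) * ((2 : ℂ)⁻¹ • D)) := by rw [h2]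
      _ = (2 : ℂ)⁻¹ • D := CFC.sqrt_mul_self _ hD20
  have hstarT : star (A' + Complex.I • B') = A' - Complex.I • B' := by
    rw [star_add, hA0.star_eq, star_smul, hB0.star_eq, Complex.star_def, Complex.conj_I,
      neg_smul, ← sub_eq_add_neg]
  constructor
  · refine ⟨?_⟩
    rw [commute_iff_eq, hstarT]
    simp only [mul_add, add_mul, mul_sub, sub_mul, smul_mul_assoc, mul_smul_comm, smul_smul]
    rw [← hABc.eq]
    module
  · rw [sq]
    calc (A' + Complex.I • B') * (A' + Complex.I • B')
        = A' * A' + Complex.I • (A' * B') + Complex.I • (B' * A')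
          + (Complex.I * Complex.I) • (B' * B') := by
          simp only [mul_add, add_mul, smul_mul_assoc, mul_smul_comm, smul_smul]
          module
      _ = P + Complex.I • ((2 : ℂ)⁻¹ • D) + Complex.I • ((2 : ℂ)⁻¹ • D)
          + (Complex.I * Complex.I) • Q := by
          rw [hA2, hB2, ← hABc.eq, hABD]
      _ = N := by
          rw [hN, hPdef, hQdef, Complex.I_mul_I]
          module
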